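/- Let n, m, r ∈ ℕ with m ≤ r ≤ n, let A ∈ ℝ^{n×r} have rank r, and let B ∈ ℝ^{m×r} have rank m. Then the block matrix M = [[2AᵀA, Bᵀ], [B, 0]] ∈ ℝ^{(r+m)×(r+m)} is invertible. -/
import Mathlib


open Matrix

lemma mulVec_inj_of_rank {a b : ℕ} (M : Matrix (Fin a) (Fin b) ℝ) (h : M.rank = b) :
    Function.Injective M.mulVec := by
  rw [show M.mulVec = M.mulVecLin from rfl, ← LinearMap.ker_eq_bot]
  have h1 := LinearMap.finrank_range_add_finrank_ker M.mulVecLin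
  rw [show Module.finrank ℝ (LinearMap.range M.mulVecLin) = M.rank from rfl, h] at h1
  have : Module.finrank ℝ (Fin b → ℝ) = b := by simp
  rw [this] at h1
  have hk : Module.finrank ℝ (LinearMap.ker M.mulVecLin) = 0 := by omega
  exact Submodule.finrank_eq_zero.mp hk

/-- Abstract nonsingularity of the KKT matrix: if `A ∈ ℝ^{n×r}` has rank `r` and
`B ∈ ℝ^{m×r}` has rank `m`, with `m ≤ r ≤ n`, then the block matrix
`[[2AᵀA, Bᵀ], [B, 0]]` is invertible. -/
theorem stmt_16 (n m r : ℕ) (hmr : m ≤ r) (hrn : r ≤ n)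
    (A : Matrix (Fin n) (Fin r) ℝ) (hA : A.rank = r)
    (B : Matrix (Fin m) (Fin r) ℝ) (hB : B.rank = m) :
    IsUnit (Matrix.fromBlocks ((2 : ℝ) • (A.transpose * A)) B.transpose B 0).det := by
  rw [isUnit_iff_ne_zero]
  intro hdet
  obtain ⟨v, hv, hMv⟩ := (Matrix.exists_mulVec_eq_zero_iff).mpr hdet
  set x : Fin r → ℝ := v ∘ Sum.inl with hx
  set y : Fin m → ℝ := v ∘ Sum.inr with hy
  have hveq : v = Sum.elim x y := by funext i; cases i <;> rfl
  rw [hveq, fromBlocks_mulVec] at hMv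
  have h1 : ((2 : ℝ) • (Aᵀ * A)) *ᵥ x + Bᵀ *ᵥ y = 0 := by
    funext i; exact congrFun hMv (Sum.inl i)
  have h2 : B *ᵥ x = 0 := by
    funext i
    have := congrFun hMv (Sum.inr i)
    simpa using this
  -- dot with x
  have hdot : x ⬝ᵥ (((2 : ℝ) • (Aᵀ * A)) *ᵥ x) + x ⬝ᵥ (Bᵀ *ᵥ y) = 0 := by
    rw [← dotProduct_add, h1, dotProduct_zero]
  have hby : x ⬝ᵥ (Bᵀ *ᵥ y) = 0 := by
    rw [dotProduct_mulVec, vecMul_transpose, h2, zero_dotProduct]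
  have hAA : x ⬝ᵥ (((2 : ℝ) • (Aᵀ * A)) *ᵥ x) = 2 * ((A *ᵥ x) ⬝ᵥ (A *ᵥ x)) := by
    rw [smul_mulVec, dotProduct_smul, ← Matrix.mulVec_mulVec,
      dotProduct_mulVec, vecMul_transpose]
    simp [smul_eq_mul]
  rw [hby, add_zero, hAA] at hdot
  have hAx : A *ᵥ x = 0 := by
    rw [← dotProduct_self_eq_zero (v := A *ᵥ x)]
    linarith
  have hxz : x = 0 := by
    have hinj := mulVec_inj_of_rank A hA
    have : A *ᵥ x = A *ᵥ 0 := by rw [hAx, mulVec_zero]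
    exact hinj this
  have hyz : y = 0 := by
    have hBt : Bᵀ.rank = m := by rw [Matrix.rank_transpose, hB]
    have hinj := mulVec_inj_of_rank Bᵀ hBt
    have hBty : Bᵀ *ᵥ y = 0 := by
      have := h1
      rw [hxz, mulVec_zero, zero_add] at this
      exact this
    have : Bᵀ *ᵥ y = Bᵀ *ᵥ 0 := by rw [hBty, mulVec_zero]
    exact hinj this
  apply hv
  rw [hveq, hxz, hyz]
  funext i; cases i <;> rfl
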